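/- Let θ₁, θ₂ > 0 and α₁ ∈ (1,2). For every x > 0 there exists a unique q₁ = q₁(x) ∈ (0,x) satisfying θ₁α₁ q₁^{α₁−1} = 2θ₂(x − q₁); set q₂(x) = x − q₁(x). Then as x → ∞: q₂(x) / x^{α₁−1} → α₁θ₁/(2θ₂), q₁(x)/x → 1, and (θ₁ q₁(x)^{α₁} + θ₂ q₂(x)²) / x^{α₁} → θ₁. (Asymptotic solution of the exponent-balancing system in Proposition 1, part 3a.) -/

import Mathlib

open Filter Real

/-- Asymptotic solution of the exponent-balancing system in Proposition 1, part 3a: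
for `θ₁, θ₂ > 0` and `α₁ ∈ (1,2)`, the system `q₁ + q₂ = x`,
`θ₁ α₁ q₁^{α₁-1} = 2 θ₂ q₂` has a unique solution with `q₁ ∈ (0,x)`, and as `x → ∞`,
`q₂(x)/x^{α₁-1} → α₁θ₁/(2θ₂)`, `q₁(x)/x → 1`, and
`(θ₁ q₁(x)^{α₁} + θ₂ q₂(x)²)/x^{α₁} → θ₁`. -/
theorem stmt14
    (θ₁ θ₂ α₁ : ℝ) (hθ₁ : 0 < θ₁) (hθ₂ : 0 < θ₂) (hα₁ : 1 < α₁) (hα₂ : α₁ < 2)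
    (q₁ : ℝ → ℝ)
    (hq : ∀ x : ℝ, 0 < x → q₁ x ∈ Set.Ioo 0 x ∧
        θ₁ * α₁ * q₁ x ^ (α₁ - 1) = 2 * θ₂ * (x - q₁ x)) :
    (∀ x : ℝ, 0 < x → ∃! q : ℝ, q ∈ Set.Ioo 0 x ∧
        θ₁ * α₁ * q ^ (α₁ - 1) = 2 * θ₂ * (x - q)) ∧
      Tendsto (fun x => (x - q₁ x) / x ^ (α₁ - 1)) atTop
        (nhds (α₁ * θ₁ / (2 * θ₂))) ∧
      Tendsto (fun x => q₁ x / x) atTop (nhds 1) ∧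
      Tendsto (fun x =>
          (θ₁ * q₁ x ^ α₁ + θ₂ * (x - q₁ x) ^ 2) / x ^ α₁) atTop (nhds θ₁) := by
  have hα0 : (0:ℝ) < α₁ - 1 := by linarith
  have hθα : 0 < θ₁ * α₁ := by positivity
  have h2θ : (0:ℝ) < 2 * θ₂ := by positivity
  set c : ℝ := θ₁ * α₁ / (2 * θ₂) with hc
  have hcpos : 0 < c := by positivity
  -- uniqueness part
  have huniq : ∀ x : ℝ, 0 < x → ∃! q : ℝ, q ∈ Set.Ioo 0 x ∧
      θ₁ * α₁ * q ^ (α₁ - 1) = 2 * θ₂ * (x - q) := by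
    intro x hx
    obtain ⟨hmem, heq⟩ := hq x hx
    refine ⟨q₁ x, ⟨hmem, heq⟩, ?_⟩
    rintro q ⟨⟨hq0, hqx⟩, heq'⟩
    rcases lt_trichotomy q (q₁ x) with h | h | h
    · exfalso
      have h1 : q ^ (α₁ - 1) ≤ (q₁ x) ^ (α₁ - 1) :=
        Real.rpow_le_rpow hq0.le h.le hα0.le
      nlinarith [mul_le_mul_of_nonneg_left h1 hθα.le]
    · exact h
    · exfalso
      have h1 : (q₁ x) ^ (α₁ - 1) ≤ q ^ (α₁ - 1) :=
        Real.rpow_le_rpow hmem.1.le h.le hα0.le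
      nlinarith [mul_le_mul_of_nonneg_left h1 hθα.le]
  -- key identity
  have hkey : ∀ x : ℝ, 0 < x → x - q₁ x = c * (q₁ x) ^ (α₁ - 1) := by
    intro x hx
    obtain ⟨_, heq⟩ := hq x hx
    rw [hc]
    field_simp
    linarith
  -- x^(α₁-2) → 0
  have hx2 : Tendsto (fun x : ℝ => x ^ (α₁ - 2)) atTop (nhds 0) := by
    have := tendsto_rpow_neg_atTop (y := 2 - α₁) (by linarith)
    convert this using 2 with x
    ring_nf
  -- limit of q₁ x / x
  have hr : Tendsto (fun x => q₁ x / x) atTop (nhds 1) := by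
    have hlow : ∀ᶠ x : ℝ in atTop, 1 - c * x ^ (α₁ - 2) ≤ q₁ x / x := by
      filter_upwards [eventually_gt_atTop 0] with x hx
      obtain ⟨⟨hq0, hqx⟩, _⟩ := hq x hx
      have hb : (q₁ x) ^ (α₁ - 1) ≤ x ^ (α₁ - 1) :=
        Real.rpow_le_rpow hq0.le hqx.le hα0.le
      have h1 : x - q₁ x ≤ c * x ^ (α₁ - 1) := by
        rw [hkey x hx]
        exact mul_le_mul_of_nonneg_left hb hcpos.le
      have hxe : x ^ (α₁ - 1) = x ^ (α₁ - 2) * x := by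
        rw [← Real.rpow_add_one hx.ne' (α₁ - 2)]
        ring_nf
      rw [le_div_iff₀ hx]
      nlinarith [h1, hxe]
    have hhigh : ∀ᶠ x : ℝ in atTop, q₁ x / x ≤ 1 := by
      filter_upwards [eventually_gt_atTop 0] with x hx
      obtain ⟨⟨hq0, hqx⟩, _⟩ := hq x hx
      rw [div_le_one hx]; exact hqx.le
    have hL : Tendsto (fun x : ℝ => 1 - c * x ^ (α₁ - 2)) atTop (nhds 1) := by
      have := (tendsto_const_nhds (x := c)).mul hx2
      have h := (tendsto_const_nhds (x := (1:ℝ))).sub this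
      simpa using h
    exact tendsto_of_tendsto_of_tendsto_of_le_of_le' hL tendsto_const_nhds hlow hhigh
  -- composition: (q₁ x / x)^p → 1 for p ≥ 0
  have hcomp : ∀ p : ℝ, Tendsto (fun x => (q₁ x / x) ^ p) atTop (nhds 1) := by
    intro p
    have hcont : ContinuousAt (fun t : ℝ => t ^ p) 1 :=
      Real.continuousAt_rpow_const 1 p (Or.inl one_ne_zero)
    have := hcont.tendsto.comp hr
    simpa [Real.one_rpow, Function.comp_def] using this
  -- second limit
  have hB : Tendsto (fun x => (x - q₁ x) / x ^ (α₁ - 1)) atTop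
      (nhds (α₁ * θ₁ / (2 * θ₂))) := by
    have hlim : Tendsto (fun x => c * (q₁ x / x) ^ (α₁ - 1)) atTop (nhds c) := by
      have := (tendsto_const_nhds (x := c)).mul (hcomp (α₁ - 1))
      simpa using this
    have heqv : ∀ᶠ x : ℝ in atTop,
        c * (q₁ x / x) ^ (α₁ - 1) = (x - q₁ x) / x ^ (α₁ - 1) := by
      filter_upwards [eventually_gt_atTop 0] with x hx
      obtain ⟨⟨hq0, hqx⟩, _⟩ := hq x hx
      rw [hkey x hx, Real.div_rpow hq0.le hx.le, mul_div_assoc]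
    have := hlim.congr' heqv
    convert this using 2
    rw [hc]; ring
  refine ⟨huniq, hB, hr, ?_⟩
  -- third limit
  have hs : Tendsto (fun x => (x - q₁ x) ^ 2 / x ^ α₁) atTop (nhds 0) := by
    have hupper : ∀ᶠ x : ℝ in atTop,
        (x - q₁ x) ^ 2 / x ^ α₁ ≤ c ^ 2 * x ^ (α₁ - 2) := by
      filter_upwards [eventually_gt_atTop 0] with x hx
      obtain ⟨⟨hq0, hqx⟩, _⟩ := hq x hx
      have hb : (q₁ x) ^ (α₁ - 1) ≤ x ^ (α₁ - 1) :=
        Real.rpow_le_rpow hq0.le hqx.le hα0.le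
      have h1 : x - q₁ x ≤ c * x ^ (α₁ - 1) := by
        rw [hkey x hx]; exact mul_le_mul_of_nonneg_left hb hcpos.le
      have h0 : 0 ≤ x - q₁ x := by linarith
      have hsq : (x - q₁ x) ^ 2 ≤ c ^ 2 * (x ^ (α₁ - 1)) ^ 2 := by
        nlinarith [Real.rpow_nonneg hx.le (α₁ - 1)]
      have hid : (x ^ (α₁ - 1)) ^ 2 = x ^ (α₁ - 2) * x ^ α₁ := by
        rw [sq, ← Real.rpow_add hx, ← Real.rpow_add hx]
        ring_nf
      rw [div_le_iff₀ (Real.rpow_pos_of_pos hx α₁)]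
      calc (x - q₁ x) ^ 2 ≤ c ^ 2 * (x ^ (α₁ - 1)) ^ 2 := hsq
        _ = c ^ 2 * x ^ (α₁ - 2) * x ^ α₁ := by rw [hid]; ring
    have hlower : ∀ᶠ x : ℝ in atTop,
        (0:ℝ) ≤ (x - q₁ x) ^ 2 / x ^ α₁ := by
      filter_upwards [eventually_gt_atTop 0] with x hx
      positivity
    have hU : Tendsto (fun x : ℝ => c ^ 2 * x ^ (α₁ - 2)) atTop (nhds 0) := by
      have := (tendsto_const_nhds (x := c ^ 2)).mul hx2
      simpa using this
    exact tendsto_of_tendsto_of_tendsto_of_le_of_le' tendsto_const_nhds hU hlower hupper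
  have hfirst : Tendsto (fun x => θ₁ * (q₁ x / x) ^ α₁) atTop (nhds θ₁) := by
    have := (tendsto_const_nhds (x := θ₁)).mul (hcomp α₁)
    simpa using this
  have hsum := hfirst.add ((tendsto_const_nhds (x := θ₂)).mul hs)
  have heqv : ∀ᶠ x : ℝ in atTop,
      θ₁ * (q₁ x / x) ^ α₁ + θ₂ * ((x - q₁ x) ^ 2 / x ^ α₁)
        = (θ₁ * q₁ x ^ α₁ + θ₂ * (x - q₁ x) ^ 2) / x ^ α₁ := by
    filter_upwards [eventually_gt_atTop 0] with x hx
    obtain ⟨⟨hq0, hqx⟩, _⟩ := hq x hx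
    rw [Real.div_rpow hq0.le hx.le, add_div]
    ring
  have := hsum.congr' heqv
  simpa using this
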